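/- arXiv:2203.13095 — 3 statements merged into one kernel-verified Lean document; each statement's English description precedes it below -/
import Mathlib

section
/- Every pair of k-cores of a graph is either disjoint or one is contained in the other (cores form a laminar family). Precisely, if K1 is a k1-core and K2 is a k2-core of a finite simple graph G, then K1 ∩ K2 is empty, or K1 ⊆ K2, or K2 ⊆ K1. -/
open Set

/-- `K` induces a connected subgraph of `G` with minimum degree at least `k`. -/
def IsCoreish {V : Type*} (G : SimpleGraph V) (k : ℕ) (K : Set V) : Prop :=
  (G.induce K).Connected ∧ ∀ v ∈ K, k ≤ {u ∈ K | G.Adj v u}.ncard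

/-- A `k`-core: maximal among connected vertex sets with induced min degree ≥ k. -/
def IsKCore {V : Type*} (G : SimpleGraph V) (k : ℕ) (K : Set V) : Prop :=
  IsCoreish G k K ∧ ∀ K' : Set V, IsCoreish G k K' → K ⊆ K' → K' = K

/-- The coreness of a vertex: the largest `k` such that `v` lies in a connected
vertex set whose induced subgraph has minimum degree ≥ k. -/
noncomputable def coreness {V : Type*} (G : SimpleGraph V) (v : V) : ℕ :=
  sSup {k | ∃ K : Set V, IsCoreish G k K ∧ v ∈ K}

/-- A subcore: a maximal connected vertex set whose vertices all share the same coreness. -/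
def IsSubcore {V : Type*} (G : SimpleGraph V) (C : Set V) : Prop :=
  (G.induce C).Connected ∧ (∀ v ∈ C, ∀ w ∈ C, coreness G v = coreness G w) ∧
  ∀ C' : Set V, (G.induce C').Connected →
    (∀ v ∈ C', ∀ w ∈ C', coreness G v = coreness G w) → C ⊆ C' → C' = C

lemma isCoreish_union {V : Type*} [Fintype V] {G : SimpleGraph V} {k1 k2 : ℕ} {K1 K2 : Set V}
    (h1 : IsCoreish G k1 K1) (h2 : IsCoreish G k2 K2) (hne : (K1 ∩ K2).Nonempty) :
    IsCoreish G (min k1 k2) (K1 ∪ K2) := by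
  refine ⟨SimpleGraph.induce_union_connected h1.1.preconnected h2.1.preconnected hne, ?_⟩
  rintro v (hv | hv)
  · refine le_trans (min_le_left _ _) (le_trans (h1.2 v hv) (Set.ncard_le_ncard ?_ (toFinite _)))
    exact fun u hu => ⟨Or.inl hu.1, hu.2⟩
  · refine le_trans (min_le_right _ _) (le_trans (h2.2 v hv) (Set.ncard_le_ncard ?_ (toFinite _)))
    exact fun u hu => ⟨Or.inr hu.1, hu.2⟩

lemma isCoreish_mono {V : Type*} {G : SimpleGraph V} {k k' : ℕ} {K : Set V}
    (h : IsCoreish G k K) (hk : k' ≤ k) : IsCoreish G k' K :=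
  ⟨h.1, fun v hv => hk.trans (h.2 v hv)⟩

/-- Cores form a laminar family. -/
theorem cores_laminar {V : Type*} [Fintype V] (G : SimpleGraph V)
    (k1 k2 : ℕ) (K1 K2 : Set V)
    (h1 : IsKCore G k1 K1) (h2 : IsKCore G k2 K2) :
    K1 ∩ K2 = ∅ ∨ K1 ⊆ K2 ∨ K2 ⊆ K1 := by
  rcases eq_empty_or_nonempty (K1 ∩ K2) with he | hne
  · exact Or.inl he
  rcases le_total k1 k2 with hk | hk
  · refine Or.inr (Or.inr ?_)
    have hc := isCoreish_mono (isCoreish_union h1.1 h2.1 hne) (le_min le_rfl hk)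
    have := h1.2 _ hc subset_union_left
    exact this ▸ subset_union_right
  · refine Or.inr (Or.inl ?_)
    have hc := isCoreish_mono (isCoreish_union h1.1 h2.1 hne) (le_min hk le_rfl)
    have := h2.2 _ hc subset_union_right
    exact this ▸ subset_union_left
end

section
/- Let K be a k-core of G with k > 0 such that every vertex of K has coreness strictly greater than k (the k-shell of K is empty). Then there is exactly one (k+1)-core contained in K; equivalently, a non-root shell tree node with no corresponding vertices has out-degree at most 1. -/
open Set

lemma IsCoreish.mono {V : Type*} {G : SimpleGraph V} {m n : ℕ} {K : Set V}
    (h : IsCoreish G m K) (hnm : n ≤ m) : IsCoreish G n K :=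
  ⟨h.1, fun v hv => le_trans hnm (h.2 v hv)⟩

lemma IsCoreish.union {V : Type*} [Fintype V] {G : SimpleGraph V} {m : ℕ} {A B : Set V} {v : V}
    (hA : IsCoreish G m A) (hB : IsCoreish G m B) (hvA : v ∈ A) (hvB : v ∈ B) :
    IsCoreish G m (A ∪ B) := by
  refine ⟨SimpleGraph.induce_union_connected hA.1.preconnected hB.1.preconnected ⟨v, hvA, hvB⟩, ?_⟩
  rintro w (hw | hw)
  · exact le_trans (hA.2 w hw) (Set.ncard_le_ncard
      (fun u hu => ⟨Or.inl hu.1, hu.2⟩) (Set.toFinite _))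
  · exact le_trans (hB.2 w hw) (Set.ncard_le_ncard
      (fun u hu => ⟨Or.inr hu.1, hu.2⟩) (Set.toFinite _))

lemma exists_coreish_of_lt_coreness {V : Type*} [Fintype V] {G : SimpleGraph V}
    {k : ℕ} {v : V} (h : k < coreness G v) :
    ∃ K : Set V, IsCoreish G (k + 1) K ∧ v ∈ K := by
  set S := {k | ∃ K : Set V, IsCoreish G k K ∧ v ∈ K} with hS
  have hne : S.Nonempty := by
    refine ⟨0, {v}, ⟨?_, fun _ _ => Nat.zero_le _⟩, rfl⟩
    constructor
    · rintro ⟨a, ha⟩ ⟨b, hb⟩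
      simp only [Set.mem_singleton_iff] at ha hb
      subst ha; subst hb
      exact SimpleGraph.Reachable.refl _
  have hbdd : BddAbove S := by
    refine ⟨Fintype.card V, fun m hm => ?_⟩
    obtain ⟨K, hK, hvK⟩ := hm
    calc m ≤ {u ∈ K | G.Adj v u}.ncard := hK.2 v hvK
      _ ≤ (Set.univ : Set V).ncard :=
          Set.ncard_le_ncard (Set.subset_univ _) (Set.toFinite _)
      _ = Fintype.card V := by rw [Set.ncard_univ, Nat.card_eq_fintype_card]
  obtain ⟨m, hm, hkm⟩ := exists_lt_of_lt_csSup hne h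
  obtain ⟨K, hK, hvK⟩ := hm
  exact ⟨K, hK.mono hkm, hvK⟩

/-- If the k-shell of a k-core K (k > 0) is empty, i.e. every vertex of K has
coreness > k, then there is exactly one (k+1)-core contained in K. -/
theorem empty_shell_unique_child {V : Type*} [Fintype V] (G : SimpleGraph V)
    (k : ℕ) (hk : 0 < k) (K : Set V) (hK : IsKCore G k K)
    (hshell : ∀ v ∈ K, k < coreness G v) :
    ∃! K' : Set V, IsKCore G (k+1) K' ∧ K' ⊆ K := by
  -- K itself is (k+1)-coreish
  have hKcore1 : IsCoreish G (k + 1) K := by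
    refine ⟨hK.1.1, fun v hv => ?_⟩
    obtain ⟨Kv, hKv, hvKv⟩ := exists_coreish_of_lt_coreness (hshell v hv)
    have hunion : IsCoreish G k (K ∪ Kv) :=
      (hK.1.union (hKv.mono (Nat.le_succ k)) hv hvKv)
    have heq : K ∪ Kv = K := hK.2 _ hunion Set.subset_union_left
    have hsub : Kv ⊆ K := by rw [← heq]; exact Set.subset_union_right
    calc k + 1 ≤ {u ∈ Kv | G.Adj v u}.ncard := hKv.2 v hvKv
      _ ≤ {u ∈ K | G.Adj v u}.ncard :=
        Set.ncard_le_ncard (fun u hu => ⟨hsub hu.1, hu.2⟩) (Set.toFinite _)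
  have hKcore : IsKCore G (k + 1) K := by
    refine ⟨hKcore1, fun K' hK' hsub => hK.2 K' (hK'.mono (Nat.le_succ k)) hsub⟩
  refine ⟨K, ⟨hKcore, subset_rfl⟩, ?_⟩
  rintro K' ⟨hK', hsub⟩
  exact (hK'.2 K hKcore1 hsub).symm
end

section
/- Inserting a single edge into a graph increases each vertex's coreness by at most 1. Precisely, if G⁺ = G ∪ {u,v} for an edge {u,v} ∉ E(G), then for all vertices w, κ_{G⁺}(w) ≤ κ_G(w) + 1. -/
open Set

/-- The restriction of `G` to a vertex set `K`, as a graph on all of `V`. -/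
def restrictG {V : Type*} (G : SimpleGraph V) (K : Set V) : SimpleGraph V where
  Adj a b := G.Adj a b ∧ a ∈ K ∧ b ∈ K
  symm := ⟨fun a b ⟨h, ha, hb⟩ => ⟨h.symm, hb, ha⟩⟩
  loopless := ⟨fun a h => G.loopless.irrefl a h.1⟩

lemma restrictG_support_mem {V : Type*} {G : SimpleGraph V} {K : Set V} :
    ∀ {a b : V} (p : (restrictG G K).Walk a b), a ∈ K → ∀ y ∈ p.support, y ∈ K := by
  intro a b p
  induction p with
  | nil => intro ha y hy; simp_all
  | cons h q ih =>
    intro ha y hy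
    rw [SimpleGraph.Walk.support_cons, List.mem_cons] at hy
    rcases hy with rfl | hy
    · exact ha
    · exact ih h.2.2 y hy

lemma walk_reach_induce {V : Type*} {H G : SimpleGraph V}
    (hle : ∀ a b, H.Adj a b → G.Adj a b) {C : Set V} :
    ∀ {a b : V} (p : H.Walk a b) (hs : ∀ y ∈ p.support, y ∈ C),
    (G.induce C).Reachable ⟨a, hs a p.start_mem_support⟩ ⟨b, hs b p.end_mem_support⟩ := by
  intro a b p
  induction p with
  | nil => intro hs; rfl
  | @cons a c b h q ih =>
    intro hs
    have ha : a ∈ C := hs a (by simp)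
    have hc : c ∈ C := hs c (by simp)
    have hs' : ∀ y ∈ q.support, y ∈ C := fun y hy => hs y (by simp [hy])
    have h1 : (G.induce C).Adj ⟨a, ha⟩ ⟨c, hc⟩ := hle a c h
    exact (h1.reachable).trans (ih hs')

lemma coreness_bddAbove {V : Type*} [Fintype V] (G : SimpleGraph V) (w : V) :
    BddAbove {k | ∃ K : Set V, IsCoreish G k K ∧ w ∈ K} := by
  refine ⟨Fintype.card V, fun k hk => ?_⟩
  obtain ⟨K, ⟨_, hdeg⟩, hwK⟩ := hk
  calc k ≤ {u ∈ K | G.Adj w u}.ncard := hdeg w hwK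
    _ ≤ (Set.univ : Set V).ncard := Set.ncard_le_ncard (Set.subset_univ _) Set.finite_univ
    _ = Fintype.card V := by rw [Set.ncard_univ, Nat.card_eq_fintype_card]

lemma coreness_nonempty {V : Type*} (G : SimpleGraph V) (w : V) :
    Set.Nonempty {k | ∃ K : Set V, IsCoreish G k K ∧ w ∈ K} := by
  refine ⟨0, {w}, ⟨?_, fun v _ => Nat.zero_le _⟩, rfl⟩
  constructor
  · intro a b
    have : a = b := Subtype.ext (a.2.trans b.2.symm)
    exact this ▸ SimpleGraph.Reachable.refl _

/-- Inserting a single edge increases each vertex's coreness by at most 1. -/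
theorem coreness_insert_at_most_one {V : Type*} [Fintype V] (G : SimpleGraph V)
    (u v : V) (huv : u ≠ v) (hnadj : ¬ G.Adj u v)
    (G' : SimpleGraph V) (hG' : G' = G ⊔ SimpleGraph.fromEdgeSet {s(u, v)}) :
    ∀ w : V, coreness G' w ≤ coreness G w + 1 := by
  classical
  intro w
  set k := coreness G' w with hk
  have hmem : k ∈ {k | ∃ K : Set V, IsCoreish G' k K ∧ w ∈ K} :=
    Nat.sSup_mem (coreness_nonempty G' w) (coreness_bddAbove G' w)
  obtain ⟨K, ⟨hconn, hdeg⟩, hwK⟩ := hmem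
  -- the connected component of w in G restricted to K
  set H := restrictG G K with hH
  set C : Set V := {x | H.Reachable w x} with hC
  have hwC : w ∈ C := SimpleGraph.Reachable.refl w
  have hCK : C ⊆ K := by
    intro x hx
    obtain ⟨p⟩ := hx
    exact restrictG_support_mem p hwK x p.end_mem_support
  -- support of any H-walk from w lies in C
  have hsuppC : ∀ {x : V} (p : H.Walk w x), ∀ y ∈ p.support, y ∈ C := by
    intro x p y hy
    exact ⟨p.takeUntil y hy⟩
  have hle : ∀ a b, H.Adj a b → G.Adj a b := fun a b h => h.1
  -- connectivity of the induced graph on C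
  have hconnC : (G.induce C).Connected := by
    haveI : Nonempty ↥C := ⟨⟨w, hwC⟩⟩
    constructor
    intro a b
    have key : ∀ c : ↥C, (G.induce C).Reachable ⟨w, hwC⟩ c := by
      intro ⟨c, hc⟩
      obtain ⟨p⟩ := hc
      exact walk_reach_induce hle p (hsuppC p)
    exact (key a).symm.trans (key b)
  -- neighborhoods in C equal neighborhoods in K
  have hnbhd : ∀ x ∈ C, {u' ∈ C | G.Adj x u'} = {u' ∈ K | G.Adj x u'} := by
    intro x hx
    ext u'
    simp only [Set.mem_setOf_eq, hC]
    constructor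
    · rintro ⟨h1, h2⟩; exact ⟨hCK h1, h2⟩
    · rintro ⟨h1, h2⟩
      refine ⟨hx.trans (SimpleGraph.Adj.reachable ⟨h2, hCK hx, h1⟩), h2⟩
  -- adjacency in G'
  have hadj' : ∀ x y, G'.Adj x y ↔ G.Adj x y ∨ (x = u ∧ y = v) ∨ (x = v ∧ y = u) := by
    intro x y
    rw [hG']
    simp only [SimpleGraph.sup_adj, SimpleGraph.fromEdgeSet_adj, Set.mem_singleton_iff,
      Sym2.eq_iff]
    constructor
    · rintro (h | ⟨(⟨rfl, rfl⟩ | ⟨rfl, rfl⟩), hne⟩)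
      · exact Or.inl h
      · exact Or.inr (Or.inl ⟨rfl, rfl⟩)
      · exact Or.inr (Or.inr ⟨rfl, rfl⟩)
    · rintro (h | ⟨rfl, rfl⟩ | ⟨rfl, rfl⟩)
      · exact Or.inl h
      · exact Or.inr ⟨Or.inl ⟨rfl, rfl⟩, huv⟩
      · exact Or.inr ⟨Or.inr ⟨rfl, rfl⟩, huv.symm⟩
  -- degree bound: G'-degree in K ≤ G-degree in K + 1
  have hdegC : ∀ x ∈ C, k ≤ {u' ∈ C | G.Adj x u'}.ncard + 1 := by
    intro x hx
    have hxK := hCK hx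
    have hsub : {u' ∈ K | G'.Adj x u'} ⊆
        insert (if x = u then v else u) {u' ∈ K | G.Adj x u'} := by
      intro y hy
      obtain ⟨hyK, hadj⟩ := hy
      rcases (hadj' x y).mp hadj with h | ⟨h1, h2⟩ | ⟨h1, h2⟩
      · exact Set.mem_insert_of_mem _ ⟨hyK, h⟩
      · simp [h1, h2]
      · have hif : (if x = u then v else u) = u :=
          if_neg (by rw [h1]; exact fun h => huv h.symm)
        rw [hif, h2]; exact Set.mem_insert _ _
    calc k ≤ {u' ∈ K | G'.Adj x u'}.ncard := hdeg x hxK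
      _ ≤ (insert (if x = u then v else u) {u' ∈ K | G.Adj x u'}).ncard :=
          Set.ncard_le_ncard hsub (Set.toFinite _)
      _ ≤ {u' ∈ K | G.Adj x u'}.ncard + 1 := Set.ncard_insert_le _ _
      _ = {u' ∈ C | G.Adj x u'}.ncard + 1 := by rw [hnbhd x hx]
  -- conclude: k-1 is achievable in G
  have hcoreishC : IsCoreish G (k - 1) C := by
    refine ⟨hconnC, fun x hx => ?_⟩
    have := hdegC x hx
    omega
  have hle' : k - 1 ≤ coreness G w :=
    le_csSup (coreness_bddAbove G w) ⟨C, hcoreishC, hwC⟩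
  omega
end
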